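/- Let $n,r,k,t$ be positive integers with $k\ge2$ and $t+2\le r\le n$. Then $|\mathcal{H}_1(n,r,k,t+2,t)| = (t+2)\binom{n-t-1}{r-t-1}k^{r-t-1} - (t+1)\binom{n-t-2}{r-t-2}k^{r-t-2}$. -/

import Mathlib

open Finset

attribute [local instance] Classical.propDecidable

/-- The ground set `[n] × [k]`. -/
def box (n k : ℕ) : Finset (ℕ × ℕ) := Finset.Icc 1 n ×ˢ Finset.Icc 1 k

/-- A `k`-signed set on `[n]`: a subset of `[n] × [k]` with pairwise distinct first coordinates. -/
def IsSigned (n k : ℕ) (T : Finset (ℕ × ℕ)) : Prop :=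
  T ⊆ box n k ∧ (T.image Prod.fst).card = T.card

/-- `L n r k`: the collection of `k`-signed `r`-sets on `[n]`. -/
def L (n r k : ℕ) : Finset (Finset (ℕ × ℕ)) :=
  (box n k).powerset.filter (fun F => F.card = r ∧ (F.image Prod.fst).card = r)

/-- A family is `t`-intersecting if any two members meet in at least `t` elements. -/
def IsTIntersecting (t : ℕ) (F : Finset (Finset (ℕ × ℕ))) : Prop :=
  ∀ A ∈ F, ∀ B ∈ F, t ≤ (A ∩ B).card

/-- `T` is a `t`-cover of the family `F`: a `k`-signed set meeting every member in ≥ `t` points. -/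
def IsTCover (n k t : ℕ) (F : Finset (Finset (ℕ × ℕ))) (T : Finset (ℕ × ℕ)) : Prop :=
  IsSigned n k T ∧ ∀ A ∈ F, t ≤ (T ∩ A).card

/-- `F` is a maximal `t`-intersecting subfamily of `L n r k`. -/
def IsMaximalTIntersecting (n r k t : ℕ) (F : Finset (Finset (ℕ × ℕ))) : Prop :=
  F ⊆ L n r k ∧ IsTIntersecting t F ∧
    ∀ G ⊆ L n r k, IsTIntersecting t G → F ⊆ G → G = F

/-- A `t`-intersecting family is trivial if all members contain a fixed `k`-signed `t`-set. -/
def IsTrivial (n k t : ℕ) (F : Finset (Finset (ℕ × ℕ))) : Prop :=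
  ∃ T, IsSigned n k T ∧ T.card = t ∧ ∀ A ∈ F, T ⊆ A

/-- `Msig d = {(1,1),(2,1),…,(d,1)}`. -/
def Msig (d : ℕ) : Finset (ℕ × ℕ) := (Finset.Icc 1 d).image (fun x => (x, 1))

/-- The family `H₁(n,r,k,ℓ,t)`. -/
def H1 (n r k l t : ℕ) : Finset (Finset (ℕ × ℕ)) :=
  (L n r k).filter (fun F =>
    (Msig t ⊆ F ∧ t + 1 ≤ (F ∩ Msig l).card) ∨
    (¬ Msig t ⊆ F ∧ (F ∩ Msig l).card = l - 1))

/-- The family `H₂(n,r,k,c,t)`. -/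
def H2 (n r k c t : ℕ) : Finset (Finset (ℕ × ℕ)) :=
  (L n r k).filter (fun F =>
    (Msig t ⊆ F ∧ t + 1 ≤ (F ∩ Msig r).card) ∨
    (F ∩ Msig r = Msig t ∧ Msig c \ Msig r ⊆ F) ∨
    (¬ Msig t ⊆ F ∧ (F ∩ Msig r).card = r - 1 ∧ (F ∩ (Msig c \ Msig r)).card = 1))

/-- The set of all `t`-covers of `F` of size `t+1`. -/
noncomputable def TauSet (n k t : ℕ) (F : Finset (Finset (ℕ × ℕ))) : Finset (Finset (ℕ × ℕ)) :=
  (box n k).powerset.filter (fun T => IsTCover n k t F T ∧ T.card = t + 1)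


noncomputable def SCount (k : ℕ) (X : Finset ℕ) (m : ℕ) : Finset (Finset (ℕ × ℕ)) :=
  (X ×ˢ Finset.Icc 1 k).powerset.filter (fun T => T.card = m ∧ (T.image Prod.fst).card = m)

lemma mem_SCount {k m : ℕ} {X : Finset ℕ} {T : Finset (ℕ × ℕ)} :
    T ∈ SCount k X m ↔ T ⊆ X ×ˢ Finset.Icc 1 k ∧ T.card = m ∧ (T.image Prod.fst).card = m := by
  simp [SCount, and_assoc]

lemma SCount_card (k : ℕ) (X : Finset ℕ) : ∀ m, (SCount k X m).card = X.card.choose m * k ^ m := by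
  classical
  induction X using Finset.induction with
  | empty =>
    intro m
    cases m with
    | zero => simp [SCount, Finset.filter_singleton]
    | succ m => simp [SCount, Finset.filter_singleton]
  | @insert a X ha ih =>
    intro m
    have hneg : (SCount k (insert a X) m).filter (fun T => ¬ a ∈ T.image Prod.fst)
        = SCount k X m := by
      apply Finset.ext; intro T
      simp only [Finset.mem_filter, mem_SCount]
      constructor
      · rintro ⟨⟨hsub, h1, h2⟩, hna⟩
        refine ⟨?_, h1, h2⟩
        intro p hp
        have h3 := hsub hp
        rw [Finset.mem_product] at h3 ⊢
        refine ⟨?_, h3.2⟩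
        rcases Finset.mem_insert.1 h3.1 with h4 | h4
        · exact absurd (h4 ▸ Finset.mem_image_of_mem Prod.fst hp) hna
        · exact h4
      · rintro ⟨hsub, h1, h2⟩
        refine ⟨⟨fun p hp => ?_, h1, h2⟩, fun hc => ?_⟩
        · have h3 := hsub hp
          rw [Finset.mem_product] at h3 ⊢
          exact ⟨Finset.mem_insert_of_mem h3.1, h3.2⟩
        · obtain ⟨p, hp, hpa⟩ := Finset.mem_image.1 hc
          have := (Finset.mem_product.1 (hsub hp)).1
          rw [hpa] at this; exact ha this
    have key : (SCount k (insert a X) m).card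
        = ((SCount k (insert a X) m).filter (fun T => a ∈ T.image Prod.fst)).card
        + (SCount k X m).card := by
      rw [← hneg]
      exact (Finset.card_filter_add_card_filter_not _).symm
    cases m with
    | zero =>
      have hz : ((SCount k (insert a X) 0).filter (fun T => a ∈ T.image Prod.fst)) = ∅ := by
        apply Finset.filter_false_of_mem
        intro T hT
        have h1 := (mem_SCount.1 hT).2.1
        rw [Finset.card_eq_zero] at h1
        subst h1; simp
      rw [key, hz]; simp [ih 0]
    | succ m =>
      have huniq : ∀ T ∈ (SCount k (insert a X) (m+1)).filter (fun T => a ∈ T.image Prod.fst),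
          ∃! p, p ∈ T ∧ p.1 = a := by
        intro T hT
        rw [Finset.mem_filter, mem_SCount] at hT
        obtain ⟨⟨hsub, h1, h2⟩, hmem⟩ := hT
        obtain ⟨p, hp, hpa⟩ := Finset.mem_image.1 hmem
        have hinj : Set.InjOn Prod.fst (T : Set (ℕ × ℕ)) :=
          Finset.card_image_iff.1 (by rw [h1, h2])
        exact ⟨p, ⟨hp, hpa⟩, fun q ⟨hq, hqa⟩ => hinj hq hp (by rw [hqa, hpa])⟩
      -- membership of inserted sets
      have hins : ∀ j' ∈ Finset.Icc 1 k, ∀ T' ∈ SCount k X m,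
          insert (a, j') T' ∈ (SCount k (insert a X) (m+1)).filter
            (fun T => a ∈ T.image Prod.fst) := by
        intro j' hj' T' hT'
        rw [mem_SCount] at hT'
        obtain ⟨hsub, h1, h2⟩ := hT'
        have hna : ∀ p ∈ T', p.1 ≠ a := by
          intro p hp hc
          have := (Finset.mem_product.1 (hsub hp)).1
          rw [hc] at this; exact ha this
        rw [Finset.mem_filter, mem_SCount]
        refine ⟨⟨?_, ?_, ?_⟩, ?_⟩
        · intro p hp
          rcases Finset.mem_insert.1 hp with rfl | hp
          · rw [Finset.mem_product]; exact ⟨Finset.mem_insert_self _ _, hj'⟩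
          · have h3 := hsub hp
            rw [Finset.mem_product] at h3 ⊢
            exact ⟨Finset.mem_insert_of_mem h3.1, h3.2⟩
        · rw [Finset.card_insert_of_notMem (fun hc => hna _ hc rfl), h1]
        · rw [Finset.image_insert, Finset.card_insert_of_notMem, h2]
          intro hc
          obtain ⟨p, hp, hpa⟩ := Finset.mem_image.1 hc
          exact hna p hp hpa
        · exact Finset.mem_image.2 ⟨(a, j'), Finset.mem_insert_self _ _, rfl⟩
      have hB : ((SCount k (insert a X) (m+1)).filter (fun T => a ∈ T.image Prod.fst)).card
          = (Finset.Icc 1 k ×ˢ SCount k X m).card := by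
        refine Finset.card_bij'
          (i := fun T hT => ((T.choose (fun p => p.1 = a) (huniq T hT)).2,
            T.filter (fun p => ¬ p.1 = a)))
          (j := fun q _ => insert (a, q.1) q.2) ?_ ?_ ?_ ?_
        · -- hi
          intro T hT
          beta_reduce
          have hu := huniq T hT
          rw [Finset.mem_filter, mem_SCount] at hT
          obtain ⟨⟨hsub, h1, h2⟩, hmem⟩ := hT
          set c := T.choose (fun p => p.1 = a) hu with hc
          have hcT : c ∈ T := Finset.choose_mem (fun p => p.1 = a) T hu
          have hca : c.1 = a := Finset.choose_property (fun p => p.1 = a) T hu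
          have hfilt : T.filter (fun p => p.1 = a) = {c} := by
            apply Finset.ext; intro p
            simp only [Finset.mem_filter, Finset.mem_singleton]
            constructor
            · intro ⟨hp, hpa⟩; exact hu.unique ⟨hp, hpa⟩ ⟨hcT, hca⟩
            · rintro rfl; exact ⟨hcT, hca⟩
          have hcard : (T.filter (fun p => ¬ p.1 = a)).card = m := by
            have h5 := Finset.card_filter_add_card_filter_not
              (s := T) (fun p => p.1 = a)
            rw [hfilt, Finset.card_singleton, h1] at h5
            omega
          rw [Finset.mem_product]
          constructor
          · exact (Finset.mem_product.1 (hsub hcT)).2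
          · rw [mem_SCount]
            refine ⟨?_, hcard, ?_⟩
            · intro p hp
              rw [Finset.mem_filter] at hp
              have h3 := hsub hp.1
              rw [Finset.mem_product] at h3 ⊢
              refine ⟨?_, h3.2⟩
              rcases Finset.mem_insert.1 h3.1 with h4 | h4
              · exact absurd h4 hp.2
              · exact h4
            · rw [← hcard]
              apply Finset.card_image_iff.2
              exact (Finset.card_image_iff.1 (by rw [h1, h2])).mono
                (by exact_mod_cast Finset.filter_subset _ _)
        · -- hj
          rintro ⟨j', T'⟩ hq
          rw [Finset.mem_product] at hq
          exact hins j' hq.1 T' hq.2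
        · -- left inverse
          intro T hT
          beta_reduce
          have hu := huniq T hT
          set c := T.choose (fun p => p.1 = a) hu with hc
          have hcT : c ∈ T := Finset.choose_mem (fun p => p.1 = a) T hu
          have hca : c.1 = a := Finset.choose_property (fun p => p.1 = a) T hu
          show insert (a, c.2) (T.filter (fun p => ¬ p.1 = a)) = T
          have hceq : (a, c.2) = c := by
            rw [← hca]
          rw [hceq]
          apply Finset.ext; intro p
          simp only [Finset.mem_insert, Finset.mem_filter]
          constructor
          · rintro (rfl | ⟨hp, _⟩)
            · exact hcT
            · exact hp
          · intro hp
            by_cases hpa : p.1 = a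
            · left; exact (hu.unique ⟨hp, hpa⟩ ⟨hcT, hca⟩)
            · right; exact ⟨hp, hpa⟩
        · -- right inverse
          rintro ⟨j', T'⟩ hq
          beta_reduce
          rw [Finset.mem_product] at hq
          obtain ⟨hq1, hq2⟩ := hq
          have hT := hins j' hq1 T' hq2
          rw [mem_SCount] at hq2
          obtain ⟨hsub, h1, h2⟩ := hq2
          have hna : ∀ p ∈ T', p.1 ≠ a := by
            intro p hp hc
            have := (Finset.mem_product.1 (hsub hp)).1
            rw [hc] at this; exact ha this
          have hu := huniq (insert (a, j') T') hT
          have hcval : (insert (a, j') T').choose (fun p => p.1 = a) hu = (a, j') :=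
            hu.unique ⟨Finset.choose_mem (fun p : ℕ × ℕ => p.1 = a) _ hu,
              Finset.choose_property (fun p : ℕ × ℕ => p.1 = a) _ hu⟩
              ⟨Finset.mem_insert_self _ _, rfl⟩
          have hfilt : (insert (a, j') T').filter (fun p => ¬ p.1 = a) = T' := by
            apply Finset.ext; intro p
            simp only [Finset.mem_filter, Finset.mem_insert]
            constructor
            · rintro ⟨rfl | hp, hpa⟩
              · exact absurd rfl hpa
              · exact hp
            · intro hp; exact ⟨Or.inr hp, hna p hp⟩
          simp only [hcval, hfilt]
      rw [key, hB, Finset.card_product, Nat.card_Icc, ih]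
      rw [Finset.card_insert_of_notMem ha, Nat.choose_succ_succ, pow_succ]
      have hkk : k + 1 - 1 = k := by omega
      rw [hkk, ih]
      ring

lemma mem_L {n r k : ℕ} {F : Finset (ℕ × ℕ)} :
    F ∈ L n r k ↔ F ⊆ box n k ∧ F.card = r ∧ (F.image Prod.fst).card = r := by
  simp [L, and_assoc]

lemma card_superset (n r k s : ℕ) (S : Finset (ℕ × ℕ)) (hSb : S ⊆ box n k)
    (hSsig : (S.image Prod.fst).card = S.card) (hs : S.card = s) (hsr : s ≤ r) (hrn : r ≤ n) :
    ((L n r k).filter (fun F => S ⊆ F)).card = (n - s).choose (r - s) * k ^ (r - s) := by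
  classical
  set C := S.image Prod.fst with hC
  have hCsub : C ⊆ Finset.Icc 1 n := by
    intro c hc
    obtain ⟨p, hp, hpc⟩ := Finset.mem_image.1 hc
    have := (Finset.mem_product.1 (hSb hp)).1
    rwa [hpc] at this
  have hCcard : C.card = s := by rw [hC, hSsig, hs]
  set X := Finset.Icc 1 n \ C with hX
  have hXcard : X.card = n - s := by
    rw [hX, Finset.card_sdiff_of_subset hCsub, Nat.card_Icc, hCcard]
    omega
  have hkey : ((L n r k).filter (fun F => S ⊆ F)).card = (SCount k X (r - s)).card := by
    refine Finset.card_bij' (i := fun F _ => F \ S) (j := fun T _ => T ∪ S) ?_ ?_ ?_ ?_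
    · -- hi
      intro F hF
      beta_reduce
      rw [Finset.mem_filter, mem_L] at hF
      obtain ⟨⟨hFb, h1, h2⟩, hSF⟩ := hF
      have hinj : Set.InjOn Prod.fst (F : Set (ℕ × ℕ)) :=
        Finset.card_image_iff.1 (by rw [h1, h2])
      rw [mem_SCount]
      have hcard : (F \ S).card = r - s := by
        rw [Finset.card_sdiff_of_subset hSF, h1, hs]
      refine ⟨?_, hcard, ?_⟩
      · intro p hp
        rw [Finset.mem_sdiff] at hp
        obtain ⟨hpF, hpS⟩ := hp
        have hb := Finset.mem_product.1 (hFb hpF)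
        rw [Finset.mem_product]
        refine ⟨?_, hb.2⟩
        rw [hX, Finset.mem_sdiff]
        refine ⟨hb.1, fun hc => ?_⟩
        obtain ⟨q, hq, hqp⟩ := Finset.mem_image.1 hc
        have : q = p := hinj (Finset.mem_coe.2 (hSF hq)) (Finset.mem_coe.2 hpF) hqp
        exact hpS (this ▸ hq)
      · rw [← hcard]
        apply Finset.card_image_iff.2
        exact hinj.mono (by exact_mod_cast Finset.sdiff_subset)
    · -- hj
      intro T hT
      beta_reduce
      rw [mem_SCount] at hT
      obtain ⟨hTsub, h1, h2⟩ := hT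
      have hTX : ∀ p ∈ T, p.1 ∈ X := fun p hp => (Finset.mem_product.1 (hTsub hp)).1
      have hdisj : Disjoint T S := by
        rw [Finset.disjoint_left]
        intro p hpT hpS
        have h3 := hTX p hpT
        rw [hX, Finset.mem_sdiff] at h3
        exact h3.2 (Finset.mem_image_of_mem Prod.fst hpS)
      have hdisjI : Disjoint (T.image Prod.fst) C := by
        rw [Finset.disjoint_left]
        intro c hcT hcC
        obtain ⟨p, hp, hpc⟩ := Finset.mem_image.1 hcT
        have h3 := hTX p hp
        rw [hX, Finset.mem_sdiff, hpc] at h3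
        exact h3.2 hcC
      rw [Finset.mem_filter, mem_L]
      refine ⟨⟨?_, ?_, ?_⟩, Finset.subset_union_right⟩
      · intro p hp
        rcases Finset.mem_union.1 hp with hp | hp
        · have hb := Finset.mem_product.1 (hTsub hp)
          have h3 := hb.1
          rw [hX, Finset.mem_sdiff] at h3
          show p ∈ Finset.Icc 1 n ×ˢ Finset.Icc 1 k
          rw [Finset.mem_product]
          exact ⟨h3.1, hb.2⟩
        · exact hSb hp
      · rw [Finset.card_union_of_disjoint hdisj, h1, hs]
        omega
      · rw [Finset.image_union, Finset.card_union_of_disjoint hdisjI, h2, hCcard]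
        omega
    · -- left inverse
      intro F hF
      beta_reduce
      rw [Finset.mem_filter] at hF
      exact Finset.sdiff_union_of_subset hF.2
    · -- right inverse
      intro T hT
      beta_reduce
      rw [mem_SCount] at hT
      obtain ⟨hTsub, h1, h2⟩ := hT
      apply Finset.union_sdiff_cancel_right
      rw [Finset.disjoint_left]
      intro p hpT hpS
      have h3 := (Finset.mem_product.1 (hTsub hpT)).1
      rw [hX, Finset.mem_sdiff] at h3
      exact h3.2 (Finset.mem_image_of_mem Prod.fst hpS)
  rw [hkey, SCount_card, hXcard]


lemma Msig_card (d : ℕ) : (Msig d).card = d := by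
  rw [Msig, Finset.card_image_of_injective _ (fun a b h => congrArg Prod.fst h), Nat.card_Icc]
  omega

lemma Msig_image (d : ℕ) : (Msig d).image Prod.fst = Finset.Icc 1 d := by
  ext x
  simp [Msig]

lemma Msig_signed (d : ℕ) : ((Msig d).image Prod.fst).card = (Msig d).card := by
  rw [Msig_image, Msig_card, Nat.card_Icc]
  omega

lemma Msig_subset_box {d n k : ℕ} (hd : d ≤ n) (hk : 1 ≤ k) : Msig d ⊆ box n k := by
  intro p hp
  obtain ⟨i, hi, hip⟩ := Finset.mem_image.1 hp
  rw [Finset.mem_Icc] at hi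
  subst hip
  have hbx : box n k = Finset.Icc 1 n ×ˢ Finset.Icc 1 k := rfl
  rw [hbx, Finset.mem_product, Finset.mem_Icc, Finset.mem_Icc]
  omega

lemma Msig_mono {d e : ℕ} (h : d ≤ e) : Msig d ⊆ Msig e :=
  Finset.image_subset_image (Finset.Icc_subset_Icc le_rfl h)

theorem H1_card_t_plus_two (n r k t : ℕ) (hn : 0 < n) (ht : 0 < t)
    (hk : 2 ≤ k) (htr : t + 2 ≤ r) (hrn : r ≤ n) :
    ((H1 n r k (t + 2) t).card : ℤ) =
      (t + 2) * (n - t - 1).choose (r - t - 1) * (k : ℤ) ^ (r - t - 1) -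
        (t + 1) * (n - t - 2).choose (r - t - 2) * (k : ℤ) ^ (r - t - 2) := by
  classical
  set M := Msig (t + 2) with hM
  have hkpos : 1 ≤ k := by omega
  have hMcard : M.card = t + 2 := Msig_card _
  have hMbox : M ⊆ box n k := Msig_subset_box (le_trans htr hrn) hkpos
  have hMsig : (M.image Prod.fst).card = M.card := Msig_signed _
  have hMinj : Set.InjOn Prod.fst (M : Set (ℕ × ℕ)) :=
    Finset.card_image_iff.1 hMsig
  have hcap_le : ∀ F : Finset (ℕ × ℕ), (F ∩ M).card ≤ t + 2 := fun F =>
    (Finset.card_le_card Finset.inter_subset_right).trans_eq hMcard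
  have miM : ∀ i ∈ Finset.Icc 1 (t + 2), (i, 1) ∈ M := fun i hi =>
    Finset.mem_image_of_mem _ hi
  have hecard : ∀ i ∈ Finset.Icc 1 (t + 2), (M.erase (i, 1)).card = t + 1 := by
    intro i hi
    rw [Finset.card_erase_of_mem (miM i hi), hMcard]
    omega
  -- Step 0 : H1 is the family with |F ∩ M| ≥ t+1
  have hH1 : H1 n r k (t + 2) t = (L n r k).filter (fun F => t + 1 ≤ (F ∩ M).card) := by
    apply Finset.filter_congr
    intro F _
    simp only [← hM]
    constructor
    · rintro (⟨_, h⟩ | ⟨_, h⟩)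
      · exact h
      · omega
    · intro h
      by_cases hMt : Msig t ⊆ F
      · exact Or.inl ⟨hMt, h⟩
      · refine Or.inr ⟨hMt, ?_⟩
        have h2 := hcap_le F
        have h3 : (F ∩ M).card ≠ t + 2 := by
          intro hc
          have h4 : F ∩ M = M := Finset.eq_of_subset_of_card_le
            Finset.inter_subset_right (by omega)
          have h5 : M ⊆ F := Finset.inter_eq_right.1 h4
          exact hMt ((Msig_mono (by omega)).trans h5)
        omega
  -- counts of supersets
  set A := (n - (t + 1)).choose (r - (t + 1)) * k ^ (r - (t + 1)) with hA
  set B := (n - (t + 2)).choose (r - (t + 2)) * k ^ (r - (t + 2)) with hB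
  have hBcount : ((L n r k).filter (fun F => M ⊆ F)).card = B :=
    card_superset n r k (t + 2) M hMbox hMsig hMcard htr hrn
  have hAcount : ∀ i ∈ Finset.Icc 1 (t + 2),
      ((L n r k).filter (fun F => M.erase (i, 1) ⊆ F)).card = A := by
    intro i hi
    exact card_superset n r k (t + 1) (M.erase (i, 1))
      ((Finset.erase_subset _ _).trans hMbox)
      (Finset.card_image_of_injOn (hMinj.mono (by exact_mod_cast Finset.erase_subset _ _)))
      (hecard i hi) (by omega) hrn
  -- split the superset family of each erase set
  have hsplit : ∀ i ∈ Finset.Icc 1 (t + 2),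
      (L n r k).filter (fun F => M.erase (i, 1) ⊆ F)
        = (L n r k).filter (fun F => F ∩ M = M.erase (i, 1))
          ∪ (L n r k).filter (fun F => M ⊆ F) := by
    intro i hi
    ext F
    simp only [Finset.mem_filter, Finset.mem_union]
    constructor
    · rintro ⟨hFL, hsub⟩
      have hsub2 : M.erase (i, 1) ⊆ F ∩ M := fun p hp =>
        Finset.mem_inter.2 ⟨hsub hp, Finset.erase_subset _ _ hp⟩
      have hc1 : t + 1 ≤ (F ∩ M).card := by
        have := Finset.card_le_card hsub2
        rw [hecard i hi] at this
        exact this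
      by_cases hc : (F ∩ M).card ≤ t + 1
      · left
        exact ⟨hFL, (Finset.eq_of_subset_of_card_le hsub2 (by rw [hecard i hi]; omega)).symm⟩
      · right
        refine ⟨hFL, Finset.inter_eq_right.1 ?_⟩
        apply Finset.eq_of_subset_of_card_le Finset.inter_subset_right
        have := hcap_le F
        rw [hMcard]
        omega
    · rintro (⟨hFL, heq⟩ | ⟨hFL, hsub⟩)
      · exact ⟨hFL, heq ▸ Finset.inter_subset_left⟩
      · exact ⟨hFL, (Finset.erase_subset _ _).trans hsub⟩
  have hdisj1 : ∀ i ∈ Finset.Icc 1 (t + 2),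
      Disjoint ((L n r k).filter (fun F => F ∩ M = M.erase (i, 1)))
        ((L n r k).filter (fun F => M ⊆ F)) := by
    intro i hi
    rw [Finset.disjoint_left]
    intro F h1 h2
    rw [Finset.mem_filter] at h1 h2
    have h3 : F ∩ M = M := Finset.inter_eq_right.2 h2.2
    have h4 := hecard i hi
    rw [h1.2] at h3
    rw [h3, hMcard] at h4
    omega
  -- the exactly-(t+1) family is the disjoint union over i
  have hbi : (L n r k).filter (fun F => (F ∩ M).card = t + 1)
      = (Finset.Icc 1 (t + 2)).biUnion
          (fun i => (L n r k).filter (fun F => F ∩ M = M.erase (i, 1))) := by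
    ext F
    simp only [Finset.mem_filter, Finset.mem_biUnion]
    constructor
    · rintro ⟨hFL, hc⟩
      have hne : ¬ M ⊆ F ∩ M := by
        intro hsub
        have := Finset.card_le_card hsub
        omega
      obtain ⟨p, hpM, hpF⟩ := Finset.not_subset.1 hne
      obtain ⟨i, hi, hip⟩ := Finset.mem_image.1 hpM
      refine ⟨i, hi, hFL, ?_⟩
      subst hip
      apply Finset.eq_of_subset_of_card_le
      · intro q hq
        rw [Finset.mem_erase]
        refine ⟨fun hqe => hpF (hqe ▸ hq), (Finset.inter_subset_right hq)⟩
      · rw [hecard i hi, hc]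
    · rintro ⟨i, hi, hFL, heq⟩
      refine ⟨hFL, ?_⟩
      rw [heq, hecard i hi]
  have hpair : ∀ i ∈ Finset.Icc 1 (t + 2), ∀ j ∈ Finset.Icc 1 (t + 2), i ≠ j →
      Disjoint ((L n r k).filter (fun F => F ∩ M = M.erase (i, 1)))
        ((L n r k).filter (fun F => F ∩ M = M.erase (j, 1))) := by
    intro i hi j hj hij
    rw [Finset.disjoint_left]
    intro F h1 h2
    rw [Finset.mem_filter] at h1 h2
    have heq : M.erase (i, 1) = M.erase (j, 1) := by rw [← h1.2, h2.2]
    have hmem : (j, 1) ∈ M.erase (i, 1) :=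
      Finset.mem_erase.2 ⟨by simp [hij.symm], miM j hj⟩
    rw [heq] at hmem
    exact Finset.notMem_erase _ _ hmem
  -- split the top family
  have htop : (L n r k).filter (fun F => t + 1 ≤ (F ∩ M).card)
      = (L n r k).filter (fun F => (F ∩ M).card = t + 1)
        ∪ (L n r k).filter (fun F => M ⊆ F) := by
    ext F
    simp only [Finset.mem_filter, Finset.mem_union]
    constructor
    · rintro ⟨hFL, hc⟩
      by_cases h : (F ∩ M).card = t + 1
      · exact Or.inl ⟨hFL, h⟩
      · right
        refine ⟨hFL, Finset.inter_eq_right.1 ?_⟩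
        apply Finset.eq_of_subset_of_card_le Finset.inter_subset_right
        have := hcap_le F
        rw [hMcard]
        omega
    · rintro (⟨hFL, h⟩ | ⟨hFL, h⟩)
      · exact ⟨hFL, by omega⟩
      · have h3 : F ∩ M = M := Finset.inter_eq_right.2 h
        refine ⟨hFL, ?_⟩
        rw [h3, hMcard]
        omega
  have htopdisj : Disjoint ((L n r k).filter (fun F => (F ∩ M).card = t + 1))
      ((L n r k).filter (fun F => M ⊆ F)) := by
    rw [Finset.disjoint_left]
    intro F h1 h2
    rw [Finset.mem_filter] at h1 h2
    have h3 : F ∩ M = M := Finset.inter_eq_right.2 h2.2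
    rw [h3, hMcard] at h1
    omega
  -- assemble counts
  have e1 : (H1 n r k (t + 2) t).card
      = ((L n r k).filter (fun F => (F ∩ M).card = t + 1)).card + B := by
    rw [hH1, htop, Finset.card_union_of_disjoint htopdisj, hBcount]
  have e2 : ((L n r k).filter (fun F => (F ∩ M).card = t + 1)).card
      = ∑ i ∈ Finset.Icc 1 (t + 2),
          ((L n r k).filter (fun F => F ∩ M = M.erase (i, 1))).card := by
    rw [hbi, Finset.card_biUnion hpair]
  have e3 : ∀ i ∈ Finset.Icc 1 (t + 2),
      ((L n r k).filter (fun F => F ∩ M = M.erase (i, 1))).card + B = A := by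
    intro i hi
    have h := hAcount i hi
    rw [hsplit i hi, Finset.card_union_of_disjoint (hdisj1 i hi), hBcount] at h
    exact h
  have e4 : (∑ i ∈ Finset.Icc 1 (t + 2),
      ((L n r k).filter (fun F => F ∩ M = M.erase (i, 1))).card) + (t + 2) * B
      = (t + 2) * A := by
    have h := Finset.sum_congr rfl e3
    rw [Finset.sum_add_distrib, Finset.sum_const, Nat.card_Icc, Finset.sum_const,
      Nat.card_Icc] at h
    simp only [smul_eq_mul] at h
    have h5 : t + 2 + 1 - 1 = t + 2 := by omega
    rw [h5] at h
    omega
  have big : (H1 n r k (t + 2) t).card + (t + 2) * B = (t + 2) * A + B := by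
    rw [e1, e2]
    omega
  -- final arithmetic over ℤ
  have hA1 : n - t - 1 = n - (t + 1) := by omega
  have hA2 : r - t - 1 = r - (t + 1) := by omega
  have hB1 : n - t - 2 = n - (t + 2) := by omega
  have hB2 : r - t - 2 = r - (t + 2) := by omega
  rw [hA1, hA2, hB1, hB2]
  have bigZ : ((H1 n r k (t + 2) t).card : ℤ) + (t + 2) * B = (t + 2) * A + B := by
    exact_mod_cast big
  rw [hA, hB] at bigZ
  push_cast at bigZ
  linarith
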